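/- A non-negative integer sequence (ε_1, ε_2, …) is admissible for the base β > 1 if and only if for every k ≥ 1, the shifted sequence (ε_k, ε_{k+1}, …) is lexicographically strictly smaller than the infinite β-expansion (ε*_1(β), ε*_2(β), …) of 1. -/

import Mathlib

open MeasureTheory Filter Real Set

noncomputable section

/-- The β-transformation `x ↦ βx mod 1`. -/
def bT (β x : ℝ) : ℝ := Int.fract (β * x)

/-- The digit `ε_{j+1}(x, β) = ⌊β T_β^j x⌋` (0-indexed). -/
def dig (β x : ℝ) (j : ℕ) : ℤ := ⌊β * (bT β)^[j] x⌋

/-- A finite word is admissible if it is the initial digit string of some `x ∈ [0,1)`. -/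
def Adm (β : ℝ) (w : List ℤ) : Prop :=
  ∃ x ∈ Set.Ico (0:ℝ) 1, ∀ i : Fin w.length, dig β x i = w.get i

/-- The set `Σ_β^n` of admissible words of length `n`. -/
def SigmaB (β : ℝ) (n : ℕ) : Set (List ℤ) := {w | w.length = n ∧ Adm β w}

/-- The cylinder of a word. -/
def cyl (β : ℝ) (w : List ℤ) : Set ℝ :=
  {x | x ∈ Set.Ico (0:ℝ) 1 ∧ ∀ i : Fin w.length, dig β x i = w.get i}

/-- The length of a cylinder. -/
def cylLen (β : ℝ) (w : List ℤ) : ℝ := (volume (cyl β w)).toReal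

/-- A word/cylinder is full if the cylinder has maximal length `β^{-n}`. -/
def IsFull (β : ℝ) (w : List ℤ) : Prop := cylLen β w = (β ^ w.length)⁻¹

/-- The left endpoint `Σ_j ε_j β^{-j}` of the cylinder of a word. -/
def leftpt (β : ℝ) (w : List ℤ) : ℝ :=
  ∑ i : Fin w.length, (w.get i : ℝ) / β ^ ((i : ℕ) + 1)

/-- Birkhoff (ergodic) sum `S_n f(x)`. -/
def birk (β : ℝ) (f : ℝ → ℝ) (n : ℕ) (x : ℝ) : ℝ :=
  ∑ j ∈ Finset.range n, f ((bT β)^[j] x)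

/-- The digit sequence of `1`. -/
def eps1 (β : ℝ) (j : ℕ) : ℤ := ⌊β * (bT β)^[j] 1⌋

/-- The infinite β-expansion of `1`. -/
def epsStar (β : ℝ) : ℕ → ℤ := by
  classical
  exact
  if h : ∃ m, eps1 β m ≠ 0 ∧ ∀ k, m < k → eps1 β k = 0 then
    fun j =>
      if j % (h.choose + 1) = h.choose then eps1 β h.choose - 1
      else eps1 β (j % (h.choose + 1))
  else eps1 β

/-- Strict lexicographic order on integer sequences. -/
def lexLt (a b : ℕ → ℤ) : Prop := ∃ k, (∀ j, j < k → a j = b j) ∧ a k < b k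

/-- The partition function `Σ_{w ∈ Σ_β^n} sup_{y ∈ I_n(w)} e^{S_n g(y)}`. -/
def presSum (β : ℝ) (g : ℝ → ℝ) (n : ℕ) : ℝ :=
  ∑' w : SigmaB β n, ⨆ y ∈ cyl β (w : List ℤ), Real.exp (birk β g n y)

/-- The pressure function `P(g, T_β)`. -/
def pressure (β : ℝ) (g : ℝ → ℝ) : ℝ :=
  limUnder Filter.atTop fun n : ℕ => Real.log (presSum β g n) / n

end


noncomputable section ParryAux
set_option maxRecDepth 4000

def valN (β : ℝ) (a : ℕ → ℤ) (n : ℕ) : ℝ := ∑ j ∈ Finset.range n, (a j : ℝ) / β ^ (j+1)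

lemma bT_iter_mem {β : ℝ} {x : ℝ} (hx : x ∈ Set.Ico (0:ℝ) 1) (n : ℕ) :
    (bT β)^[n] x ∈ Set.Ico (0:ℝ) 1 := by
  induction n with
  | zero => simpa using hx
  | succ n ih =>
    rw [Function.iterate_succ_apply']
    exact ⟨Int.fract_nonneg _, Int.fract_lt_one _⟩

lemma bT_iter_zero (β : ℝ) (n : ℕ) : (bT β)^[n] (0:ℝ) = 0 := by
  induction n with
  | zero => rfl
  | succ n ih => rw [Function.iterate_succ_apply', ih]; simp [bT]

lemma telescope {β : ℝ} (hβ : 1 < β) (x : ℝ) (n : ℕ) :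
    x = valN β (dig β x) n + (β^n)⁻¹ * (bT β)^[n] x := by
  have hβ0 : (0:ℝ) < β := lt_trans one_pos hβ
  induction n with
  | zero => simp [valN]
  | succ n ih =>
    rw [show valN β (dig β x) (n+1) = valN β (dig β x) n + (dig β x n : ℝ)/β^(n+1) from Finset.sum_range_succ _ _]
    rw [Function.iterate_succ_apply']
    have : bT β ((bT β)^[n] x) = β * (bT β)^[n] x - (dig β x n : ℝ) := by
      simp only [bT, Int.fract, dig]
    rw [this]
    have h1 : (β : ℝ) ^ n ≠ 0 := by positivity
    have h2 : (β : ℝ) ^ (n+1) ≠ 0 := by positivity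
    have key : (β^(n+1))⁻¹ * (β * (bT β)^[n] x - (dig β x n : ℝ))
        = (β^n)⁻¹ * (bT β)^[n] x - (dig β x n : ℝ)/β^(n+1) := by
      have hb : (β:ℝ) ≠ 0 := by positivity
      rw [pow_succ, mul_inv]
      field_simp
    rw [key]; linarith [ih]

lemma dig_shift (β x : ℝ) (k j : ℕ) : dig β x (k + j) = dig β ((bT β)^[k] x) j := by
  simp only [dig, ← Function.iterate_add_apply]
  rw [Nat.add_comm j k]

lemma iter_one_mem {β : ℝ} (n : ℕ) : (bT β)^[n] (1:ℝ) ∈ Set.Icc (0:ℝ) 1 := by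
  cases n with
  | zero => simp
  | succ n =>
    rw [Function.iterate_succ_apply']
    exact ⟨Int.fract_nonneg _, le_of_lt (Int.fract_lt_one _)⟩

lemma eps1_zero {β : ℝ} : eps1 β 0 = ⌊β⌋ := by simp [eps1]

lemma one_telescope {β : ℝ} (hβ : 1 < β) (n : ℕ) :
    (1:ℝ) = valN β (eps1 β) n + (β^n)⁻¹ * (bT β)^[n] 1 :=
  telescope hβ 1 n

/-- If `T^n x = 0` then all later digits `dig` of x vanish. -/
lemma dig_zero_of_iter_zero {β : ℝ} {x : ℝ} {n : ℕ} (h : (bT β)^[n] x = 0)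
    {k : ℕ} (hk : n ≤ k) : dig β x k = 0 := by
  obtain ⟨j, rfl⟩ := Nat.exists_eq_add_of_le hk
  rw [dig_shift]
  simp only [dig, h, bT_iter_zero, mul_zero, Int.floor_zero]

def PFin (β : ℝ) : Prop := ∃ m, eps1 β m ≠ 0 ∧ ∀ k, m < k → eps1 β k = 0

def epsStar' (β : ℝ) : ℕ → ℤ := by
  classical
  exact
  if h : ∃ m, eps1 β m ≠ 0 ∧ ∀ k, m < k → eps1 β k = 0 then
    fun j =>
      if j % (h.choose + 1) = h.choose then eps1 β h.choose - 1
      else eps1 β (j % (h.choose + 1))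
  else eps1 β

lemma epsStar'_fin {β : ℝ} (h : ∃ m, eps1 β m ≠ 0 ∧ ∀ k, m < k → eps1 β k = 0) :
    epsStar' β = fun j =>
    if j % (h.choose + 1) = h.choose then eps1 β h.choose - 1
    else eps1 β (j % (h.choose + 1)) := by
  unfold epsStar'
  rw [dif_pos h]

lemma epsStar'_inf {β : ℝ} (h : ¬ ∃ m, eps1 β m ≠ 0 ∧ ∀ k, m < k → eps1 β k = 0) :
    epsStar' β = eps1 β := by
  unfold epsStar'
  rw [dif_neg h]

lemma eps1_zero_ne {β : ℝ} (hβ : 1 < β) : eps1 β 0 ≠ 0 := by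
  rw [eps1_zero]
  have : (1:ℤ) ≤ ⌊β⌋ := by
    rw [Int.le_floor]; exact_mod_cast le_of_lt hβ
  omega

lemma fin_of_iter_zero {β : ℝ} (hβ : 1 < β) {n : ℕ} (h : (bT β)^[n] (1:ℝ) = 0) :
    PFin β := by
  unfold PFin
  set P := fun k => eps1 β k ≠ 0 with hP
  have h0 : P 0 := eps1_zero_ne hβ
  have hzero : ∀ k, n ≤ k → eps1 β k = 0 := fun k hk =>
    dig_zero_of_iter_zero h hk
  classical
  refine ⟨Nat.findGreatest P n, Nat.findGreatest_spec (Nat.zero_le n) h0, fun k hk => ?_⟩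
  by_cases hkn : k ≤ n
  · by_contra hne
    exact Nat.findGreatest_is_greatest hk hkn hne
  · exact hzero k (le_of_lt (not_le.mp hkn))

lemma iter_one_pos_inf {β : ℝ} (hβ : 1 < β) (h : ¬ PFin β) (n : ℕ) :
    0 < (bT β)^[n] (1:ℝ) := by
  rcases lt_or_eq_of_le (iter_one_mem n).1 with h' | h'
  · exact h'
  · exact absurd (fin_of_iter_zero hβ h'.symm) h

lemma inv_pow_tendsto {β : ℝ} (hβ : 1 < β) :
    Filter.Tendsto (fun n : ℕ => (β^n)⁻¹) Filter.atTop (nhds 0) := by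
  simp only [← inv_pow]
  apply tendsto_pow_atTop_nhds_zero_of_lt_one
  · positivity
  · rw [inv_lt_one_iff₀]; right; exact hβ

lemma iter_zero_fin {β : ℝ} (hβ : 1 < β) {m : ℕ} (hm2 : ∀ k, m < k → eps1 β k = 0) :
    (bT β)^[m+1] (1:ℝ) = 0 := by
  set t := (bT β)^[m+1] (1:ℝ) with htdef
  have ht : t ∈ Set.Ico (0:ℝ) 1 := by
    rw [htdef, Function.iterate_succ_apply']
    exact ⟨Int.fract_nonneg _, Int.fract_lt_one _⟩
  have hd : ∀ j, dig β t j = 0 := by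
    intro j
    have : dig β (1:ℝ) (m + 1 + j) = dig β t j := dig_shift β 1 (m+1) j
    rw [← this]
    exact hm2 _ (by omega)
  have hle : ∀ n : ℕ, t ≤ (β^n)⁻¹ := by
    intro n
    have := telescope hβ t n
    have hz : valN β (dig β t) n = 0 := by
      simp [valN, hd]
    rw [hz, zero_add] at this
    rw [this]
    have h1 : (bT β)^[n] t ≤ 1 := le_of_lt (bT_iter_mem ht n).2
    have h2 : (0:ℝ) < (β^n)⁻¹ := by positivity
    nlinarith
  have : t ≤ 0 := ge_of_tendsto (inv_pow_tendsto hβ) (Filter.Eventually.of_forall hle)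
  linarith [ht.1]

lemma iter_one_pos_fin {β : ℝ} (hβ : 1 < β) {m : ℕ} (hm1 : eps1 β m ≠ 0)
    {n : ℕ} (hn : n ≤ m) : 0 < (bT β)^[n] (1:ℝ) := by
  rcases lt_or_eq_of_le (iter_one_mem n).1 with h' | h'
  · exact h'
  · exfalso
    apply hm1
    have hmn : n + (m - n) = m := by omega
    have : eps1 β m = dig β (1:ℝ) (n + (m - n)) := by rw [hmn]; rfl
    rw [this, dig_shift, ← h']
    simp [dig, bT_iter_zero]

lemma valN_add {β : ℝ} (hβ : 1 < β) (a : ℕ → ℤ) (p n : ℕ) :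
    valN β a (p + n) = valN β a p + (β^p)⁻¹ * valN β (fun i => a (p+i)) n := by
  induction n with
  | zero => simp [valN]
  | succ n ih =>
    have e1 : valN β a (p + (n+1)) = valN β a (p+n) + (a (p+n) : ℝ)/β^(p+n+1) := by
      rw [show p + (n+1) = (p+n)+1 from rfl]
      exact Finset.sum_range_succ _ _
    have e2 : valN β (fun i => a (p+i)) (n+1)
        = valN β (fun i => a (p+i)) n + (a (p+n) : ℝ)/β^(n+1) := Finset.sum_range_succ _ _
    rw [e1, e2, ih]
    have hb : (β:ℝ) ≠ 0 := by positivity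
    have : (a (p+n) : ℝ)/β^(p+n+1) = (β^p)⁻¹ * ((a (p+n):ℝ)/β^(n+1)) := by
      rw [show p+n+1 = p + (n+1) from by omega, pow_add]
      field_simp
    rw [this]
    ring

lemma valE_bounds {β : ℝ} (hβ : 1 < β) (n : ℕ) :
    1 - (β^n)⁻¹ ≤ valN β (epsStar' β) n ∧ valN β (epsStar' β) n < 1 := by
  have hβ0 : (0:ℝ) < β := lt_trans one_pos hβ
  have hval1 : ∀ k : ℕ, valN β (eps1 β) k = 1 - (β^k)⁻¹ * (bT β)^[k] 1 := by
    intro k; have := one_telescope hβ k; linarith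
  by_cases h : ∃ m, eps1 β m ≠ 0 ∧ ∀ k, m < k → eps1 β k = 0
  · -- finite case
    set m := h.choose with hmdef
    obtain ⟨hm1, hm2⟩ := h.choose_spec
    have hE := epsStar'_fin h
    set E := epsStar' β with hEdef
    have hEj : ∀ j, j < m → E j = eps1 β j := by
      intro j hj
      rw [hE]
      simp only
      rw [Nat.mod_eq_of_lt (by omega)]
      rw [if_neg (by omega)]
    have hEm : E m = eps1 β m - 1 := by
      rw [hE]; simp only
      rw [Nat.mod_eq_of_lt (by omega), if_pos rfl]
    have hEper : ∀ j, E (j + (m+1)) = E j := by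
      intro j
      rw [hE]; simp only [hmdef, Nat.add_mod_right]
    have hvalEq : ∀ k, k ≤ m → valN β E k = valN β (eps1 β) k := by
      intro k hk
      apply Finset.sum_congr rfl
      intro j hj
      rw [Finset.mem_range] at hj
      rw [hEj j (by omega)]
    have hiter0 : (bT β)^[m+1] (1:ℝ) = 0 := iter_zero_fin hβ hm2
    have hone : valN β (eps1 β) (m+1) = 1 := by
      rw [hval1 (m+1), hiter0, mul_zero, sub_zero]
    have hvalm1 : valN β E (m+1) = 1 - (β^(m+1))⁻¹ := by
      have e1 : valN β E (m+1) = valN β E m + (E m : ℝ)/β^(m+1) := Finset.sum_range_succ _ _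
      have e2 : valN β (eps1 β) (m+1) = valN β (eps1 β) m + (eps1 β m : ℝ)/β^(m+1) :=
        Finset.sum_range_succ _ _
      rw [e1, hvalEq m le_rfl, hEm]
      push_cast
      rw [sub_div]
      rw [hone] at e2
      have : (1:ℝ)/β^(m+1) = (β^(m+1))⁻¹ := one_div _
      linarith [this.le, this.ge]
    have hper : ∀ k, 1 - valN β E (k + (m+1)) = (β^(m+1))⁻¹ * (1 - valN β E k) := by
      intro k
      rw [Nat.add_comm k (m+1), valN_add hβ E (m+1) k]
      have : valN β (fun i => E ((m+1)+i)) k = valN β E k := by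
        apply Finset.sum_congr rfl
        intro j _
        simp only
        rw [Nat.add_comm (m+1) j, hEper]
      rw [this, hvalm1]
      ring
    have hu : ∀ k, 0 < 1 - valN β E k ∧ β^k * (1 - valN β E k) ≤ 1 := by
      intro k
      induction k using Nat.strong_induction_on with
      | _ k ih =>
        by_cases hk : k ≤ m
        · rw [hvalEq k hk, hval1 k]
          have hpos : 0 < (bT β)^[k] (1:ℝ) := iter_one_pos_fin hβ hm1 hk
          have hle : (bT β)^[k] (1:ℝ) ≤ 1 := (iter_one_mem k).2
          constructor
          · have : (0:ℝ) < (β^k)⁻¹ := by positivity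
            nlinarith
          · have hne : (β:ℝ)^k ≠ 0 := by positivity
            have : β^k * (1 - (1 - (β^k)⁻¹ * (bT β)^[k] 1)) = (bT β)^[k] 1 := by
              field_simp
              ring
            rw [this]; exact hle
        · push_neg at hk
          have hk' : k = (k - (m+1)) + (m+1) := by omega
          rw [hk', hper]
          obtain ⟨ih1, ih2⟩ := ih (k - (m+1)) (by omega)
          constructor
          · have : (0:ℝ) < (β^(m+1))⁻¹ := by positivity
            nlinarith
          · have hne : (β:ℝ)^(m+1) ≠ 0 := by positivity
            rw [pow_add]
            calc β ^ (k-(m+1)) * β^(m+1) * ((β^(m+1))⁻¹ * (1 - valN β E (k-(m+1))))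
                = β ^ (k-(m+1)) * (1 - valN β E (k-(m+1))) * (β^(m+1) * (β^(m+1))⁻¹) := by ring
              _ = β ^ (k-(m+1)) * (1 - valN β E (k-(m+1))) := by
                  rw [mul_inv_cancel₀ hne, mul_one]
              _ ≤ 1 := ih2
    obtain ⟨h1, h2⟩ := hu n
    constructor
    · have hβn : (0:ℝ) < β^n := by positivity
      have hinv : (β^n)⁻¹ * β^n = 1 := inv_mul_cancel₀ (ne_of_gt hβn)
      nlinarith
    · linarith
  · -- infinite case
    rw [epsStar'_inf h, hval1 n]
    have hpos : 0 < (bT β)^[n] (1:ℝ) := iter_one_pos_inf hβ h n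
    have hle : (bT β)^[n] (1:ℝ) ≤ 1 := (iter_one_mem n).2
    have hβn : (0:ℝ) < (β^n)⁻¹ := by positivity
    constructor
    · nlinarith
    · nlinarith

def lexLt' (a b : ℕ → ℤ) : Prop := ∃ k, (∀ j, j < k → a j = b j) ∧ a k < b k

lemma lexTri (a b : ℕ → ℤ) : a = b ∨ lexLt' a b ∨ lexLt' b a := by
  by_cases h : ∀ j, a j = b j
  · exact Or.inl (funext h)
  · push_neg at h
    classical
    have hex : ∃ j, a j ≠ b j := h
    set k := Nat.find hex with hk
    have hkspec : a k ≠ b k := Nat.find_spec hex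
    have hpre : ∀ j, j < k → a j = b j := by
      intro j hj
      by_contra hc
      have h2 : k ≤ j := hk ▸ Nat.find_le hc
      omega
    rcases lt_or_gt_of_ne hkspec with h' | h'
    · exact Or.inr (Or.inl ⟨k, hpre, h'⟩)
    · exact Or.inr (Or.inr ⟨k, fun j hj => (hpre j hj).symm, h'⟩)

lemma dig_lexLt_epsStar {β : ℝ} (hβ : 1 < β) {y : ℝ} (hy : y ∈ Set.Ico (0:ℝ) 1) :
    lexLt' (dig β y) (epsStar' β) := by
  have hβ0 : (0:ℝ) < β := lt_trans one_pos hβ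
  set E := epsStar' β with hE
  have hylow : ∀ n, valN β (dig β y) n ≤ y := by
    intro n
    have := telescope hβ y n
    have h1 : 0 ≤ (bT β)^[n] y := (bT_iter_mem hy n).1
    have h2 : (0:ℝ) ≤ (β^n)⁻¹ := by positivity
    nlinarith
  rcases lexTri (dig β y) E with heq | hlt | hgt
  · exfalso
    have key : ∀ n, 1 - y ≤ (β^n)⁻¹ := by
      intro n
      have h1 := (valE_bounds hβ n).1
      have h2 := hylow n
      rw [heq] at h2
      linarith
    have : 1 - y ≤ 0 := ge_of_tendsto (inv_pow_tendsto hβ) (Filter.Eventually.of_forall key)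
    linarith [hy.2]
  · exact hlt
  · exfalso
    obtain ⟨k, hpre, hlt⟩ := hgt
    have h1 : valN β (dig β y) k = valN β E k := by
      apply Finset.sum_congr rfl
      intro j hj
      rw [Finset.mem_range] at hj
      rw [hpre j hj]
    have h2 : valN β (dig β y) (k+1) = valN β (dig β y) k + (dig β y k : ℝ)/β^(k+1) :=
      Finset.sum_range_succ _ _
    have h3 : valN β E (k+1) = valN β E k + (E k : ℝ)/β^(k+1) := Finset.sum_range_succ _ _
    have hcast : (E k : ℝ) + 1 ≤ (dig β y k : ℝ) := by
      exact_mod_cast Int.add_one_le_iff.mpr hlt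
    have h4 := (valE_bounds hβ (k+1)).1
    have h5 := hylow (k+1)
    have hβk : (0:ℝ) < β^(k+1) := by positivity
    have hβki : (β^(k+1))⁻¹ * β^(k+1) = 1 := inv_mul_cancel₀ (ne_of_gt hβk)
    have hdivle : (E k : ℝ)/β^(k+1) + (β^(k+1))⁻¹ ≤ (dig β y k : ℝ)/β^(k+1) := by
      rw [← one_div, ← add_div]
      gcongr
    linarith [hy.2]

lemma epsStar0_le {β : ℝ} (hβ : 1 < β) : epsStar' β 0 ≤ ⌊β⌋ := by
  by_cases h : ∃ m, eps1 β m ≠ 0 ∧ ∀ k, m < k → eps1 β k = 0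
  · rw [epsStar'_fin h]
    simp only
    rw [Nat.zero_mod]
    by_cases hm : h.choose = 0
    · rw [if_pos hm.symm, hm, eps1_zero]; omega
    · rw [if_neg (fun hc => hm hc.symm), eps1_zero]
  · rw [epsStar'_inf h, eps1_zero]

lemma parry_backward {β : ℝ} (hβ : 1 < β) (e : ℕ → ℤ) (he : ∀ n, 0 ≤ e n)
    (hlex : ∀ k : ℕ, lexLt' (fun j => e (k + j)) (epsStar' β)) :
    ∃ x ∈ Set.Ico (0:ℝ) 1, ∀ n, dig β x n = e n := by
  classical
  have hβ0 : (0:ℝ) < β := lt_trans one_pos hβ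
  set E := epsStar' β with hE
  -- digit bound
  have hle0 : ∀ n, e n ≤ E 0 := by
    intro n
    obtain ⟨k, hpre, hlt⟩ := hlex n
    rcases Nat.eq_zero_or_pos k with rfl | hk
    · simpa using le_of_lt hlt
    · have := hpre 0 hk
      simpa using this.le
  have heR : ∀ n, (e n : ℝ) ≤ β := by
    intro n
    have h1 : e n ≤ ⌊β⌋ := le_trans (hle0 n) (epsStar0_le hβ)
    calc (e n : ℝ) ≤ (⌊β⌋ : ℝ) := by exact_mod_cast h1
      _ ≤ β := Int.floor_le β
  -- summability
  have hgeo : Summable (fun j : ℕ => (β⁻¹)^j) :=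
    summable_geometric_of_lt_one (by positivity) (by
      rw [inv_lt_one_iff₀]; right; exact hβ)
  have hf : ∀ r j : ℕ, (0:ℝ) ≤ (e (r+j) : ℝ)/β^(j+1) := by
    intro r j
    have := he (r+j)
    positivity
  have hfb : ∀ r j : ℕ, (e (r+j) : ℝ)/β^(j+1) ≤ (β⁻¹)^j := by
    intro r j
    rw [div_le_iff₀ (by positivity)]
    calc (e (r+j):ℝ) ≤ β := heR _
      _ = (β⁻¹)^j * β^(j+1) := by
          rw [pow_succ, inv_pow, ← mul_assoc, inv_mul_cancel₀ (by positivity), one_mul]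
  have hsum : ∀ r : ℕ, Summable (fun j : ℕ => (e (r+j) : ℝ)/β^(j+1)) := by
    intro r
    exact Summable.of_nonneg_of_le (hf r) (hfb r) hgeo
  set V : ℕ → ℝ := fun r => ∑' j : ℕ, (e (r+j) : ℝ)/β^(j+1) with hV
  have hV0 : ∀ r, 0 ≤ V r := fun r => tsum_nonneg (hf r)
  have hVub : ∀ r, V r ≤ (1-β⁻¹)⁻¹ := by
    intro r
    calc V r ≤ ∑' j : ℕ, (β⁻¹)^j := Summable.tsum_le_tsum (hfb r) (hsum r) hgeo
      _ = (1-β⁻¹)⁻¹ := tsum_geometric_of_lt_one (by positivity) (by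
            rw [inv_lt_one_iff₀]; right; exact hβ)
  -- splitting
  have hsplit : ∀ r n : ℕ, V r = valN β (fun i => e (r+i)) n + (β^n)⁻¹ * V (r+n) := by
    intro r n
    have h1 := (hsum r).sum_add_tsum_nat_add n
    have h2 : ∀ i : ℕ, (e (r+(i+n)) : ℝ)/β^(i+n+1) = (β^n)⁻¹ * ((e ((r+n)+i):ℝ)/β^(i+1)) := by
      intro i
      rw [show r+(i+n) = (r+n)+i from by omega, show i+n+1 = n+(i+1) from by omega, pow_add]
      field_simp
    have h3 : (∑' i : ℕ, (e (r+(i+n)) : ℝ)/β^(i+n+1)) = (β^n)⁻¹ * V (r+n) := by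
      rw [tsum_congr h2, tsum_mul_left]
    have h4 : V r = ∑' (i:ℕ), (e (r+i):ℝ)/β^(i+1) := rfl
    rw [h4, ← h1, h3]
    rfl
  -- recursion
  have hrec : ∀ r, β * V r = (e r : ℝ) + V (r+1) := by
    intro r
    have h1 := hsplit r 1
    have h2 : valN β (fun i => e (r+i)) 1 = (e r : ℝ)/β := by
      simp [valN]
    rw [h2, pow_one] at h1
    rw [h1]
    field_simp
  -- the key lex estimate
  have hkey : ∀ r : ℕ, ∃ k : ℕ,
      V r ≤ valN β E (k+1) + (β^(k+1))⁻¹ * (V (r+(k+1)) - 1) := by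
    intro r
    obtain ⟨k, hpre, hlt⟩ := hlex r
    refine ⟨k, ?_⟩
    have h1 := hsplit r (k+1)
    have h2 : valN β (fun i => e (r+i)) (k+1)
        = valN β (fun i => e (r+i)) k + (e (r+k) : ℝ)/β^(k+1) := Finset.sum_range_succ _ _
    have h3 : valN β (fun i => e (r+i)) k = valN β E k := by
      apply Finset.sum_congr rfl
      intro j hj
      rw [Finset.mem_range] at hj
      rw [hpre j hj]
    have h4 : valN β E (k+1) = valN β E k + (E k : ℝ)/β^(k+1) := Finset.sum_range_succ _ _
    have hcast : (e (r+k) : ℝ) ≤ (E k : ℝ) - 1 := by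
      have hlt' : e (r+k) < E k := hlt
      have : e (r+k) ≤ E k - 1 := by omega
      exact_mod_cast this
    have hd : (e (r+k) : ℝ)/β^(k+1) ≤ (E k : ℝ)/β^(k+1) - (β^(k+1))⁻¹ := by
      rw [← one_div, ← sub_div]
      gcongr
    rw [h1, h2, h3]
    have hexp : (β^(k+1))⁻¹ * (V (r+(k+1)) - 1) = (β^(k+1))⁻¹ * V (r+(k+1)) - (β^(k+1))⁻¹ := by
      ring
    linarith
  -- sup argument : all V r ≤ 1
  have hbddV : BddAbove (Set.range V) := ⟨(1-β⁻¹)⁻¹, by rintro _ ⟨r, rfl⟩; exact hVub r⟩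
  have hneV : (Set.range V).Nonempty := ⟨V 0, 0, rfl⟩
  set S := sSup (Set.range V) with hS
  have hVS : ∀ r, V r ≤ S := fun r => le_csSup hbddV ⟨r, rfl⟩
  have hS1 : S ≤ 1 := by
    by_contra hc
    push_neg at hc
    have hub : ∀ r, V r ≤ 1 + β⁻¹ * (S - 1) := by
      intro r
      obtain ⟨k, hk⟩ := hkey r
      have h1 : valN β E (k+1) < 1 := (valE_bounds hβ (k+1)).2
      have h2 : (β^(k+1))⁻¹ * (V (r+(k+1)) - 1) ≤ β⁻¹ * (S - 1) := by
        have ha : (β^(k+1))⁻¹ * (V (r+(k+1)) - 1) ≤ (β^(k+1))⁻¹ * (S - 1) := by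
          apply mul_le_mul_of_nonneg_left _ (by positivity)
          linarith [hVS (r+(k+1))]
        have hb : (β^(k+1))⁻¹ ≤ β⁻¹ := by
          apply inv_anti₀ hβ0
          calc β = β^1 := (pow_one β).symm
            _ ≤ β^(k+1) := pow_le_pow_right₀ (le_of_lt hβ) (by omega)
        have hc2 : (β^(k+1))⁻¹ * (S - 1) ≤ β⁻¹ * (S - 1) :=
          mul_le_mul_of_nonneg_right hb (by linarith)
        linarith
      linarith
    have : S ≤ 1 + β⁻¹ * (S - 1) := csSup_le hneV (by rintro _ ⟨r, rfl⟩; exact hub r)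
    have hβi : β⁻¹ < 1 := by rw [inv_lt_one_iff₀]; right; exact hβ
    nlinarith
  have hVlt : ∀ r, V r < 1 := by
    intro r
    obtain ⟨k, hk⟩ := hkey r
    have h1 : valN β E (k+1) < 1 := (valE_bounds hβ (k+1)).2
    have h2 : V (r+(k+1)) - 1 ≤ 0 := by linarith [le_trans (hVS (r+(k+1))) hS1]
    have h3 : (β^(k+1))⁻¹ * (V (r+(k+1)) - 1) ≤ 0 :=
      mul_nonpos_of_nonneg_of_nonpos (by positivity) h2
    linarith
  -- conclude
  have hmem : ∀ r, V r ∈ Set.Ico (0:ℝ) 1 := fun r => ⟨hV0 r, hVlt r⟩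
  have hiter : ∀ n, (bT β)^[n] (V 0) = V n := by
    intro n
    induction n with
    | zero => rfl
    | succ n ih =>
      rw [Function.iterate_succ_apply', ih]
      show Int.fract (β * V n) = V (n+1)
      rw [hrec n, Int.fract_intCast_add, Int.fract_eq_self.mpr ⟨hV0 (n+1), hVlt (n+1)⟩]
  refine ⟨V 0, hmem 0, fun n => ?_⟩
  show ⌊β * (bT β)^[n] (V 0)⌋ = e n
  rw [hiter n, hrec n, Int.floor_intCast_add, Int.floor_eq_zero_iff.mpr (hmem (n+1)), add_zero]


lemma epsStar_eq_aux (β : ℝ) : epsStar β = epsStar' β := rfl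

end ParryAux

theorem stmt9 (β : ℝ) (hβ : 1 < β) (e : ℕ → ℤ) (he : ∀ n, 0 ≤ e n) :
    (∃ x ∈ Set.Ico (0:ℝ) 1, ∀ n, dig β x n = e n) ↔
      ∀ k : ℕ, lexLt (fun j => e (k + j)) (epsStar β) := by
  constructor
  · rintro ⟨x, hx, hdig⟩ k
    have hshift : (fun j => e (k + j)) = dig β ((bT β)^[k] x) := by
      funext j
      rw [← hdig (k+j), dig_shift]
    rw [hshift, epsStar_eq_aux]
    exact dig_lexLt_epsStar hβ (bT_iter_mem hx k)
  · intro hlex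
    exact parry_backward hβ e he (fun k => by
      have := hlex k
      rw [epsStar_eq_aux] at this
      exact this)
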